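/- Let T be a pretriangulated category and let A be a strictly full triangulated subcategory of T (closed under shifts, extensions, and isomorphisms) which is admissible, i.e. the inclusion functor A ↪ T admits both a left adjoint and a right adjoint. If A contains a spanning class Ω of T, then A = T, i.e. every object of T belongs to A. -/

import Mathlib

open CategoryTheory Category Limits Pretriangulated

namespace CategoryTheory.Triangulated

/-- The structure `Triangulated.Subcategory` of the older Mathlib (removed since),
restated with its old fields. -/
structure Subcategory (C : Type*) [Category C] [HasZeroObject C] [HasShift C ℤ]
    [Preadditive C] [∀ (n : ℤ), (shiftFunctor C n).Additive] [Pretriangulated C] where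
  P : C → Prop
  zero' : ∃ (Z : C) (_ : IsZero Z), P Z
  shift (X : C) (n : ℤ) : P X → P (X⟦n⟧)
  ext₂' (T : Triangle C) (_ : T ∈ distTriang C) : P T.obj₁ → P T.obj₃ → ObjectProperty.isoClosure P T.obj₂

end CategoryTheory.Triangulated

/-- A class of objects `Ω` in a pretriangulated category `T` is a spanning class if
orthogonality (on either side) to all shifts of objects of `Ω` forces an object to be zero. -/
def IsSpanningClass {T : Type*} [Category T] [HasZeroObject T] [Preadditive T]
    [HasShift T ℤ] [∀ n : ℤ, (CategoryTheory.shiftFunctor T n).Additive] [Pretriangulated T]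
    (Ω : Set T) : Prop :=
  (∀ t : T, (∀ ω ∈ Ω, ∀ i : ℤ, ∀ f : t ⟶ ω⟦i⟧, f = 0) → IsZero t) ∧
  (∀ t : T, (∀ ω ∈ Ω, ∀ i : ℤ, ∀ f : ω⟦i⟧ ⟶ t, f = 0) → IsZero t)

/-- Composition with the counit of an adjunction `ι ⊣ R` with `ι` fully faithful is bijective
on morphisms out of objects in the image of `ι`. -/
lemma comp_counit_bijective {A T : Type*} [Category A] [Category T]
    {ι : A ⥤ T} [ι.Full] [ι.Faithful] {R : T ⥤ A} (adj : ι ⊣ R) (a : A) (t : T) :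
    Function.Bijective (fun (u : ι.obj a ⟶ ι.obj (R.obj t)) => u ≫ adj.counit.app t) := by
  constructor
  · intro u v huv
    dsimp at huv
    have hu : u ≫ adj.counit.app t = (adj.homEquiv a t).symm (ι.preimage u) := by
      rw [Adjunction.homEquiv_counit, ι.map_preimage]
    have hv : v ≫ adj.counit.app t = (adj.homEquiv a t).symm (ι.preimage v) := by
      rw [Adjunction.homEquiv_counit, ι.map_preimage]
    rw [hu, hv] at huv
    have h2 := (adj.homEquiv a t).symm.injective huv
    rw [← ι.map_preimage u, ← ι.map_preimage v, h2]
  · intro w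
    refine ⟨ι.map (adj.homEquiv a t w), ?_⟩
    have : (adj.homEquiv a t).symm (adj.homEquiv a t w) = w := (adj.homEquiv a t).symm_apply_apply w
    rwa [Adjunction.homEquiv_counit] at this

/-- If an admissible strictly full triangulated subcategory `A` of a pretriangulated
category `T` contains a spanning class `Ω` of `T`, then `A = T`. -/
theorem admissible_subcategory_containing_spanning_class_eq_top
    {T : Type*} [Category T] [HasZeroObject T] [Preadditive T]
    [HasShift T ℤ] [∀ n : ℤ, (CategoryTheory.shiftFunctor T n).Additive] [Pretriangulated T]
    (A : Triangulated.Subcategory T) [ObjectProperty.IsClosedUnderIsomorphisms A.P]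
    [(ObjectProperty.ι A.P).IsRightAdjoint] [(ObjectProperty.ι A.P).IsLeftAdjoint]
    (Ω : Set T) (hΩ : IsSpanningClass Ω) (hΩA : ∀ ω ∈ Ω, A.P ω) :
    ∀ t : T, A.P t := by
  intro t
  set ι := ObjectProperty.ι A.P with hι
  let adj : ι ⊣ ι.rightAdjoint := Adjunction.ofIsLeftAdjoint ι
  set R := ι.rightAdjoint
  set ε : ι.obj (R.obj t) ⟶ t := adj.counit.app t with hε
  obtain ⟨c, g, h, hT⟩ := Pretriangulated.distinguished_cocone_triangle ε
  -- key vanishing: any map from an object of `A` to the cone `c` is zero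
  have key : ∀ (x : T), A.P x → ∀ f : x ⟶ c, f = 0 := by
    intro x hx f
    -- first, `f ≫ h = 0`
    have hfh : f ≫ h = 0 := by
      set u : x ⟶ (ι.obj (R.obj t))⟦(1 : ℤ)⟧ := f ≫ h with hu
      -- `u ≫ ε⟦1⟧' = 0`
      have h1 : u ≫ ε⟦(1 : ℤ)⟧' = 0 := by
        rw [hu, assoc]
        have := comp_distTriang_mor_zero₃₁ _ hT
        change h ≫ ε⟦(1 : ℤ)⟧' = 0 at this
        rw [this, comp_zero]
      -- transfer along the shift
      let iso := shiftFunctorCompIsoId T (1 : ℤ) (-1 : ℤ) (by omega)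
      set v : x⟦(-1 : ℤ)⟧ ⟶ ι.obj (R.obj t) := u⟦(-1 : ℤ)⟧' ≫ iso.hom.app (ι.obj (R.obj t))
        with hv
      have hve : v ≫ ε = 0 := by
        rw [hv, assoc]
        erw [← iso.hom.naturality ε]
        dsimp
        rw [← assoc, ← Functor.map_comp, h1, Functor.map_zero, zero_comp]
      have hx' : A.P (x⟦(-1 : ℤ)⟧) := A.shift x (-1) hx
      have hv0 : v = 0 := by
        refine (comp_counit_bijective adj ⟨x⟦(-1 : ℤ)⟧, hx'⟩ t).1 ?_
        show v ≫ adj.counit.app t = (0 : (⟨x⟦(-1 : ℤ)⟧, hx'⟩ : ObjectProperty.FullSubcategory A.P).obj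
          ⟶ ι.obj (R.obj t)) ≫ adj.counit.app t
        rw [zero_comp, ← hε, hve]
      have hu0 : u⟦(-1 : ℤ)⟧' = 0 := by
        have : u⟦(-1 : ℤ)⟧' = v ≫ iso.inv.app (ι.obj (R.obj t)) := by
          rw [hv, assoc, iso.hom_inv_id_app]
          exact (comp_id _).symm
        rw [this, hv0, zero_comp]
      have := (shiftFunctor T (-1 : ℤ)).map_injective
        (by rw [hu0, Functor.map_zero] :
          u⟦(-1 : ℤ)⟧' = (0 : x ⟶ (ι.obj (R.obj t))⟦(1 : ℤ)⟧)⟦(-1 : ℤ)⟧')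
      rw [hu] at this
      exact this
    -- so `f` factors through `g`, hence through `ε ≫ g = 0`
    obtain ⟨w, hw⟩ := Triangle.coyoneda_exact₃ _ hT f hfh
    change (x ⟶ t) at w
    change f = w ≫ g at hw
    obtain ⟨u, hu⟩ := (comp_counit_bijective adj ⟨x, hx⟩ t).2 w
    dsimp at hu
    rw [hw, ← hu, ← hε, assoc]
    have := comp_distTriang_mor_zero₁₂ _ hT
    change ε ≫ g = 0 at this
    rw [this, comp_zero]
  -- the cone is zero by the spanning property
  have hc : IsZero c := hΩ.2 c (fun ω hω i f => key _ (A.shift ω i (hΩA ω hω)) f)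
  have : IsIso ε := (Triangle.isZero₃_iff_isIso₁ _ hT).1 hc
  exact ObjectProperty.prop_of_iso A.P (asIso ε) (R.obj t).2
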